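/- Let h : ℝⁿ → ℝ be convex and differentiable with L-Lipschitz gradient, L > 0. Let Y ⊆ ℝⁿ be nonempty closed convex and X* ⊆ Y nonempty closed convex. Let v ∈ ℝⁿ satisfy h(v) > 0 and R_v > 0, set v̄ = Π_{X*}(v) and assume h(v̄) ≤ 0. Let β ∈ (0,1) and B_h > 0 with ‖∇h(v)‖ ≤ B_h. Define z = v − β·(h(v)/p_v)·∇h(v) and x⁺ = Π_Y(z). Then dist²(x⁺, X*) ≤ ‖v − v̄‖² − (2β(1 − β)/B_h²)·h(v)². -/

import Mathlib

set_option maxHeartbeats 1000000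
open Metric InnerProductSpace RealInnerProductSpace

/-- The center of the ball associated with the quadratic upper approximation
of `h` at `v` with parameter `L`: `c_v = v - (1/L) ∇h(v)`. -/
noncomputable def ballCenter {n : ℕ} (h : EuclideanSpace ℝ (Fin n) → ℝ) (L : ℝ)
    (v : EuclideanSpace ℝ (Fin n)) : EuclideanSpace ℝ (Fin n) :=
  v - (1 / L) • gradient h v

/-- The radius term `R_v = ‖∇h(v)‖²/L² - 2 h(v)/L`. -/
noncomputable def ballRadius {n : ℕ} (h : EuclideanSpace ℝ (Fin n) → ℝ) (L : ℝ)
    (v : EuclideanSpace ℝ (Fin n)) : ℝ :=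
  ‖gradient h v‖ ^ 2 / L ^ 2 - 2 * h v / L

/-- The adaptive parameter `p_v = ((h(v))₊ L) / (1 - √((R_v)₊)/‖v - c_v‖)`,
where division by zero is interpreted as zero (Lean's convention). -/
noncomputable def adaptP {n : ℕ} (h : EuclideanSpace ℝ (Fin n) → ℝ) (L : ℝ)
    (v : EuclideanSpace ℝ (Fin n)) : ℝ :=
  max (h v) 0 * L /
    (1 - Real.sqrt (max (ballRadius h L v) 0) / ‖v - ballCenter h L v‖)

lemma grad_conv_ineq {n : ℕ} (h : EuclideanSpace ℝ (Fin n) → ℝ)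
    (hconv : ConvexOn ℝ Set.univ h) (hdiff : Differentiable ℝ h)
    (x y : EuclideanSpace ℝ (Fin n)) :
    ⟪gradient h x, y - x⟫_ℝ ≤ h y - h x := by
  set g : ℝ → ℝ := fun t => h (x + t • (y - x)) with hg
  have hline : HasDerivAt g (⟪gradient h x, y - x⟫_ℝ) 0 := by
    have h2 : HasDerivAt (fun t : ℝ => x + t • (y - x)) (y - x) 0 := by
      simpa using ((hasDerivAt_id (0:ℝ)).smul_const (y - x)).const_add x
    have h1 : HasFDerivAt h (fderiv ℝ h x) (x + (0:ℝ) • (y - x)) := by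
      simpa using (hdiff x).hasFDerivAt
    have := h1.comp_hasDerivAt 0 h2
    have e : ⟪gradient h x, y - x⟫_ℝ = (fderiv ℝ h x) (y - x) := by
      unfold gradient; exact toDual_symm_apply
    rw [e]; exact this
  have key : ∀ t ∈ Set.Ioo (0:ℝ) 1, slope g 0 t ≤ h y - h x := by
    intro t ht
    have hmem := hconv.2 (Set.mem_univ x) (Set.mem_univ y) (by linarith [ht.2] : (0:ℝ) ≤ 1 - t)
      ht.1.le (by ring)
    have hpt : (1 - t) • x + t • y = x + t • (y - x) := by module
    rw [hpt] at hmem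
    have hg0 : g 0 = h x := by simp [hg]
    rw [slope_def_field, hg0, sub_zero, div_le_iff₀ ht.1]
    have : g t = h (x + t • (y - x)) := rfl
    rw [this]
    simp only [smul_eq_mul] at hmem
    nlinarith
  have htend : Filter.Tendsto (slope g 0) (nhdsWithin 0 (Set.Ioi 0)) (nhds ⟪gradient h x, y - x⟫_ℝ) :=
    (hasDerivAt_iff_tendsto_slope.mp hline).mono_left
      (nhdsWithin_mono 0 (fun t ht => ne_of_gt ht))
  refine le_of_tendsto htend ?_
  filter_upwards [Ioo_mem_nhdsGT_of_mem (by norm_num : (0:ℝ) ∈ Set.Ico 0 1)] with t ht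
  exact key t ht

lemma arith_aux (t g hv β Q : ℝ) (htpos : 0 < t) (hv0 : 0 < hv)
    (hβ0 : 0 < β) (hβ1 : β < 1) (hQ0 : 0 ≤ Q) (hgpos : 0 < g)
    (htg2 : t * g ^ 2 ≤ 2 * β * hv) (htg2' : β * hv ≤ t * g ^ 2)
    (hQg : Q * g ^ 2 ≤ hv ^ 2) :
    - 2 * t * hv + t ^ 2 * g ^ 2 ≤ - (2 * β * (1 - β)) * Q := by
  have hA : t ^ 2 * g ^ 2 ≤ 2 * β * t * hv := by
    nlinarith [mul_le_mul_of_nonneg_left htg2 htpos.le]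
  have hB : β * Q ≤ t * hv := by
    have h1 : β * (Q * g ^ 2) ≤ β * hv ^ 2 := mul_le_mul_of_nonneg_left hQg hβ0.le
    have h2 : β * hv * hv ≤ t * g ^ 2 * hv := mul_le_mul_of_nonneg_right htg2' hv0.le
    have hg2pos : (0:ℝ) < g ^ 2 := by positivity
    nlinarith [h1, h2, hg2pos]
  nlinarith [hA, hB, mul_le_mul_of_nonneg_left hB (by linarith : (0:ℝ) ≤ 1 - β)]


theorem stmt_8 {n : ℕ} (h : EuclideanSpace ℝ (Fin n) → ℝ)
    (hconv : ConvexOn ℝ Set.univ h) (hdiff : Differentiable ℝ h)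
    (L : ℝ) (hL : 0 < L)
    (hLip : ∀ x y, ‖gradient h x - gradient h y‖ ≤ L * ‖x - y‖)
    (Y Xstar : Set (EuclideanSpace ℝ (Fin n)))
    (hYne : Y.Nonempty) (hYcl : IsClosed Y) (hYcv : Convex ℝ Y)
    (hXsne : Xstar.Nonempty) (hXscl : IsClosed Xstar) (hXscv : Convex ℝ Xstar)
    (hXsY : Xstar ⊆ Y)
    (v : EuclideanSpace ℝ (Fin n)) (hv : 0 < h v) (hR : 0 < ballRadius h L v)
    -- `vbar = Π_{X*}(v)` : projection of `v` onto `X*`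
    (vbar : EuclideanSpace ℝ (Fin n)) (hvbarmem : vbar ∈ Xstar)
    (hvbarproj : ∀ y ∈ Xstar, ‖v - vbar‖ ≤ ‖v - y‖)
    (hfeas : h vbar ≤ 0)
    (β : ℝ) (hβ : β ∈ Set.Ioo (0 : ℝ) 1)
    (Bh : ℝ) (hBh : 0 < Bh) (hgradbd : ‖gradient h v‖ ≤ Bh)
    (z : EuclideanSpace ℝ (Fin n))
    (hz : z = v - (β * (h v / adaptP h L v)) • gradient h v)
    -- `xplus = Π_Y(z)` : projection of `z` onto `Y`
    (xplus : EuclideanSpace ℝ (Fin n)) (hxpmem : xplus ∈ Y)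
    (hxpproj : ∀ y ∈ Y, ‖z - xplus‖ ≤ ‖z - y‖) :
    (infDist xplus Xstar) ^ 2
      ≤ ‖v - vbar‖ ^ 2 - 2 * β * (1 - β) / Bh ^ 2 * (h v) ^ 2 := by
  obtain ⟨hβ0, hβ1⟩ := hβ
  set G := gradient h v with hG
  set g := ‖G‖ with hgdef
  set R := ballRadius h L v with hRdef
  have hg2 : g ^ 2 = L ^ 2 * R + 2 * h v * L := by
    rw [hRdef, ballRadius]; field_simp; rw [← hG, ← hgdef]; ring
  have hgpos : 0 < g := by
    have h1 : (0:ℝ) ≤ g := norm_nonneg G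
    nlinarith
  set s := Real.sqrt R with hsdef
  have hs0 : 0 ≤ s := Real.sqrt_nonneg R
  have hs2 : s ^ 2 = R := Real.sq_sqrt hR.le
  have hsL2 : (s * L) ^ 2 = g ^ 2 - 2 * h v * L := by nlinarith
  have hsLg : s * L < g := by nlinarith [mul_nonneg hs0 hL.le]
  -- norm of v - ballCenter
  have hnormc : ‖v - ballCenter h L v‖ = g / L := by
    rw [ballCenter, ← hG, sub_sub_cancel, norm_smul, Real.norm_eq_abs,
      abs_of_pos (by positivity : (0:ℝ) < 1 / L), ← hgdef]
    ring
  -- the denominator D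
  set D : ℝ := 1 - s * L / g with hDdef
  have hDpos : 0 < D := by
    rw [hDdef, sub_pos, div_lt_one hgpos]; exact hsLg
  have hDg : D * g = g - s * L := by rw [hDdef]; field_simp
  have hadapt : adaptP h L v = h v * L / D := by
    rw [adaptP, max_eq_left hv.le, max_eq_left hR.le, hnormc, hDdef, hsdef,
      div_div_eq_mul_div]
  -- step size
  set t : ℝ := β * (h v / adaptP h L v) with htdef
  have ht : t = β * D / L := by
    rw [htdef, hadapt]
    field_simp
  have htpos : 0 < t := by rw [ht]; positivity
  -- key inequalities on D g²
  have hDgg : D * g ^ 2 = (g - s * L) * g := by rw [pow_two, ← mul_assoc, hDg]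
  have key1 : h v * L ≤ D * g ^ 2 := by
    rw [hDgg]; nlinarith [sq_nonneg (g - s * L), hsL2]
  have key2 : D * g ^ 2 ≤ 2 * h v * L := by
    rw [hDgg]
    nlinarith [hsL2, mul_nonneg (mul_nonneg hs0 hL.le) (sub_nonneg.mpr hsLg.le)]
  have htg2 : t * g ^ 2 ≤ 2 * β * h v := by
    rw [ht]
    rw [div_mul_eq_mul_div, div_le_iff₀ hL]
    nlinarith
  have htg2' : β * h v ≤ t * g ^ 2 := by
    rw [ht, div_mul_eq_mul_div, le_div_iff₀ hL]
    nlinarith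
  -- projection variational inequality
  have hinfeq : ‖z - xplus‖ = ⨅ w : Y, ‖z - w‖ := by
    haveI : Nonempty Y := ⟨⟨xplus, hxpmem⟩⟩
    refine le_antisymm (le_ciInf fun w => hxpproj w w.2) ?_
    refine ciInf_le ⟨0, ?_⟩ (⟨xplus, hxpmem⟩ : Y)
    rintro _ ⟨w, rfl⟩
    exact norm_nonneg _
  have hvar : ⟪z - xplus, vbar - xplus⟫_ℝ ≤ 0 :=
    (norm_eq_iInf_iff_real_inner_le_zero hYcv hxpmem).mp hinfeq vbar (hXsY hvbarmem)
  have hproj : ‖xplus - vbar‖ ^ 2 ≤ ‖z - vbar‖ ^ 2 := by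
    have hexp : ‖z - vbar‖ ^ 2
        = ‖z - xplus‖ ^ 2 + 2 * ⟪z - xplus, xplus - vbar⟫_ℝ + ‖xplus - vbar‖ ^ 2 := by
      have : z - vbar = (z - xplus) + (xplus - vbar) := by abel
      rw [this, norm_add_sq_real]
    have : (0:ℝ) ≤ ⟪z - xplus, xplus - vbar⟫_ℝ := by
      have : ⟪z - xplus, xplus - vbar⟫_ℝ = - ⟪z - xplus, vbar - xplus⟫_ℝ := by
        rw [← inner_neg_right]; congr 1; abel
      rw [this]; linarith
    nlinarith [sq_nonneg ‖z - xplus‖]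
  -- expansion of ‖z - vbar‖²
  have hzv : z - vbar = (v - vbar) - t • G := by rw [hz]; abel
  have hexpand : ‖z - vbar‖ ^ 2
      = ‖v - vbar‖ ^ 2 - 2 * t * ⟪G, v - vbar⟫_ℝ + t ^ 2 * g ^ 2 := by
    rw [hzv, norm_sub_sq_real, real_inner_smul_right, norm_smul, real_inner_comm]
    rw [mul_pow, ← hgdef]
    have : |t| = t := abs_of_pos htpos
    rw [Real.norm_eq_abs, this]
    ring
  -- convexity inequality
  have hconvex : h v ≤ ⟪G, v - vbar⟫_ℝ := by
    have := grad_conv_ineq h hconv hdiff v vbar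
    have h2 : ⟪G, vbar - v⟫_ℝ = - ⟪G, v - vbar⟫_ℝ := by
      rw [← inner_neg_right]; congr 1; abel
    rw [hG] at *; linarith [h2 ▸ this]
  -- put together
  have hdist : infDist xplus Xstar ≤ ‖xplus - vbar‖ := by
    have := infDist_le_dist_of_mem (x := xplus) hvbarmem
    rwa [dist_eq_norm] at this
  have hdist2 : (infDist xplus Xstar) ^ 2 ≤ ‖xplus - vbar‖ ^ 2 := by
    have h0 : 0 ≤ infDist xplus Xstar := infDist_nonneg
    exact pow_le_pow_left₀ h0 hdist 2
  have hzb : ‖z - vbar‖ ^ 2 ≤ ‖v - vbar‖ ^ 2 - 2 * t * h v + t ^ 2 * g ^ 2 := by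
    rw [hexpand]
    linarith [mul_le_mul_of_nonneg_left hconvex htpos.le]
  -- final arithmetic
  set Q : ℝ := h v ^ 2 / Bh ^ 2 with hQdef
  have hQ0 : 0 ≤ Q := by positivity
  have hQB : Q * Bh ^ 2 = h v ^ 2 := by
    rw [hQdef]; field_simp
  have hQg : Q * g ^ 2 ≤ h v ^ 2 := by
    have hgB : g ^ 2 ≤ Bh ^ 2 := by
      have := pow_le_pow_left₀ (norm_nonneg G) hgradbd 2
      simpa using this
    calc Q * g ^ 2 ≤ Q * Bh ^ 2 := mul_le_mul_of_nonneg_left hgB hQ0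
      _ = h v ^ 2 := hQB
  have harith : - 2 * t * h v + t ^ 2 * g ^ 2 ≤ - (2 * β * (1 - β)) * Q :=
    arith_aux t g (h v) β Q htpos hv hβ0 hβ1 hQ0 hgpos htg2 htg2' hQg
  calc (infDist xplus Xstar) ^ 2 ≤ ‖xplus - vbar‖ ^ 2 := hdist2
    _ ≤ ‖z - vbar‖ ^ 2 := hproj
    _ ≤ ‖v - vbar‖ ^ 2 - 2 * t * h v + t ^ 2 * g ^ 2 := hzb
    _ ≤ ‖v - vbar‖ ^ 2 - (2 * β * (1 - β)) * Q := by linarith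
    _ = ‖v - vbar‖ ^ 2 - 2 * β * (1 - β) / Bh ^ 2 * (h v) ^ 2 := by
        rw [hQdef]; ring
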